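/- Let Q : ℝⁿ → ℝ^{n×n} be a continuous symmetric positive-semidefinite matrix function of constant rank m, and H : ℝⁿ → ℝ^{n×n} a continuous symmetric matrix function with ker Q(x) ⊆ ker H(x) for all x. Then the function ψ(x) = σ_max(H(x))/d_min(x), where d_min(x) is the smallest nonzero eigenvalue of Q(x), is well-defined and satisfies |δ'H(x)δ| ≤ ψ(x)·δ'Q(x)δ for all x, δ. Moreover, if d_min is continuous and strictly positive, ψ is continuous. -/

import Mathlib

open Matrix

/-- Smallest nonzero eigenvalue of a matrix. -/
noncomputable def dmin {n : ℕ} (A : Matrix (Fin n) (Fin n) ℝ) : ℝ :=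
  sInf {r : ℝ | 0 < r ∧ ∃ δ : Fin n → ℝ, δ ≠ 0 ∧ A *ᵥ δ = r • δ}

/-- Largest singular value (for symmetric matrices: max of |δ'Aδ| over the unit
sphere). -/
noncomputable def sigmaMax {n : ℕ} (A : Matrix (Fin n) (Fin n) ℝ) : ℝ :=
  sSup {y : ℝ | ∃ δ : Fin n → ℝ, δ ⬝ᵥ δ = 1 ∧ y = |δ ⬝ᵥ A *ᵥ δ|}

section Aux

variable {n : ℕ}

lemma quadCont2 : Continuous fun p : Matrix (Fin n) (Fin n) ℝ × (Fin n → ℝ) =>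
    |p.2 ⬝ᵥ p.1 *ᵥ p.2| :=
  (Continuous.dotProduct continuous_snd
    (continuous_fst.matrix_mulVec continuous_snd)).abs

lemma quadCont (A : Matrix (Fin n) (Fin n) ℝ) :
    Continuous fun δ : Fin n → ℝ => |δ ⬝ᵥ A *ᵥ δ| :=
  quadCont2.comp (Continuous.prodMk_right A)

lemma sphere_compact : IsCompact {δ : Fin n → ℝ | δ ⬝ᵥ δ = 1} := by
  have hcl : IsClosed {δ : Fin n → ℝ | δ ⬝ᵥ δ = 1} :=
    isClosed_eq (Continuous.dotProduct continuous_id continuous_id) continuous_const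
  have hsub : {δ : Fin n → ℝ | δ ⬝ᵥ δ = 1} ⊆ Metric.closedBall 0 1 := by
    intro δ hδ
    simp only [Metric.mem_closedBall, dist_zero_right]
    rw [pi_norm_le_iff_of_nonneg zero_le_one]
    intro i
    rw [Real.norm_eq_abs, abs_le_one_iff_mul_self_le_one]
    calc δ i * δ i ≤ ∑ j, δ j * δ j :=
          Finset.single_le_sum (fun j _ => mul_self_nonneg (δ j)) (Finset.mem_univ i)
      _ = 1 := hδ
  exact (isCompact_closedBall 0 1).of_isClosed_subset hcl hsub

lemma sigmaMax_set_eq (A : Matrix (Fin n) (Fin n) ℝ) :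
    {y : ℝ | ∃ δ : Fin n → ℝ, δ ⬝ᵥ δ = 1 ∧ y = |δ ⬝ᵥ A *ᵥ δ|}
      = (fun δ : Fin n → ℝ => |δ ⬝ᵥ A *ᵥ δ|) '' {δ | δ ⬝ᵥ δ = 1} := by
  ext y
  constructor
  · rintro ⟨δ, h1, rfl⟩; exact ⟨δ, h1, rfl⟩
  · rintro ⟨δ, h1, rfl⟩; exact ⟨δ, h1, rfl⟩

lemma sigmaMax_bdd (A : Matrix (Fin n) (Fin n) ℝ) :
    BddAbove {y : ℝ | ∃ δ : Fin n → ℝ, δ ⬝ᵥ δ = 1 ∧ y = |δ ⬝ᵥ A *ᵥ δ|} := by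
  rw [sigmaMax_set_eq]
  exact (sphere_compact.image (quadCont A)).bddAbove

lemma sigmaMax_nonneg (A : Matrix (Fin n) (Fin n) ℝ) : 0 ≤ sigmaMax A := by
  apply Real.sSup_nonneg
  rintro y ⟨δ, h1, rfl⟩
  exact abs_nonneg _

lemma le_sigmaMax (A : Matrix (Fin n) (Fin n) ℝ) {δ : Fin n → ℝ} (h : δ ⬝ᵥ δ = 1) :
    |δ ⬝ᵥ A *ᵥ δ| ≤ sigmaMax A :=
  le_csSup (sigmaMax_bdd A) ⟨δ, h, rfl⟩

lemma sigmaMax_continuous : Continuous fun A : Matrix (Fin n) (Fin n) ℝ => sigmaMax A := by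
  have h : ∀ A : Matrix (Fin n) (Fin n) ℝ, sigmaMax A
      = sSup ((fun δ : Fin n → ℝ => |δ ⬝ᵥ A *ᵥ δ|) '' {δ | δ ⬝ᵥ δ = 1}) := fun A => by
    rw [sigmaMax, sigmaMax_set_eq]
  simp only [h]
  exact sphere_compact.continuous_sSup quadCont2

lemma dmin_facts {m : ℕ} (hm : 1 ≤ m) (A : Matrix (Fin n) (Fin n) ℝ)
    (hA : A.PosSemidef) (hr : A.rank = m) :
    0 < dmin A ∧ ∀ i, 0 < hA.1.eigenvalues i → dmin A ≤ hA.1.eigenvalues i := by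
  classical
  set S := {r : ℝ | 0 < r ∧ ∃ δ : Fin n → ℝ, δ ≠ 0 ∧ A *ᵥ δ = r • δ} with hS
  set lam := hA.1.eigenvalues with hlam
  set U : Matrix (Fin n) (Fin n) ℝ := (hA.1.eigenvectorUnitary : Matrix (Fin n) (Fin n) ℝ)
    with hU
  have hU1 : U * star U = 1 := Unitary.coe_mul_star_self hA.1.eigenvectorUnitary
  have hU2 : star U * U = 1 := Unitary.coe_star_mul_self hA.1.eigenvectorUnitary
  have hspec : A = U * Matrix.diagonal lam * star U := by
    have := hA.1.spectral_theorem
    simpa only [RCLike.ofReal_real_eq_id, Function.comp_def, id_eq, Unitary.conjStarAlgAut_apply, Unitary.coe_star] using this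
  -- each positive eigenvalue is in S
  have hmem : ∀ i, 0 < lam i → lam i ∈ S := by
    intro i hi
    refine ⟨hi, ⇑(hA.1.eigenvectorBasis i), ?_, hA.1.mulVec_eigenvectorBasis i⟩
    intro hzero
    apply hA.1.eigenvectorBasis.orthonormal.ne_zero i
    ext j
    exact congrFun hzero j
  -- S is contained in the range of eigenvalues
  have hsub : S ⊆ Set.range lam := by
    rintro r ⟨hr0, δ, hδ0, hδ⟩
    set e : Fin n → ℝ := star U *ᵥ δ with he
    have hδe : U *ᵥ e = δ := by rw [he, mulVec_mulVec, hU1, one_mulVec]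
    have he0 : e ≠ 0 := by
      intro h
      rw [h, mulVec_zero] at hδe
      exact hδ0 hδe.symm
    have hDe : Matrix.diagonal lam *ᵥ e = r • e := by
      have h1 : star U *ᵥ (A *ᵥ δ) = r • e := by rw [hδ, mulVec_smul]
      rw [mulVec_mulVec, hspec] at h1
      rw [show star U * (U * Matrix.diagonal lam * star U) = Matrix.diagonal lam * star U by
        rw [← mul_assoc, ← mul_assoc, hU2, one_mul]] at h1
      rw [he, mulVec_mulVec]
      exact h1
    obtain ⟨i, hi⟩ := Function.ne_iff.mp he0
    refine ⟨i, ?_⟩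
    have := congrFun hDe i
    rw [mulVec_diagonal] at this
    simp only [Pi.smul_apply, smul_eq_mul] at this
    exact mul_right_cancel₀ hi this
  have hfin : S.Finite := (Set.finite_range lam).subset hsub
  -- S is nonempty
  have hne : S.Nonempty := by
    have hcard : Fintype.card {i // lam i ≠ 0} = m := by
      rw [hlam, ← hA.1.rank_eq_card_non_zero_eigs, hr]
    have : ∃ i, lam i ≠ 0 := by
      by_contra h
      push_neg at h
      have : Fintype.card {i // lam i ≠ 0} = 0 := by
        apply Fintype.card_eq_zero_iff.mpr
        exact ⟨fun x => x.2 (h x.1)⟩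
      omega
    obtain ⟨i, hi⟩ := this
    have hpos : 0 < lam i := lt_of_le_of_ne (hA.eigenvalues_nonneg i) (Ne.symm hi)
    exact ⟨lam i, hmem i hpos⟩
  have hdin : dmin A ∈ S := hne.csInf_mem hfin
  refine ⟨hdin.1, fun i hi => csInf_le hfin.bddBelow (hmem i hi)⟩

lemma psd_quad_nonneg (A : Matrix (Fin n) (Fin n) ℝ) (hA : A.PosSemidef)
    (δ : Fin n → ℝ) : 0 ≤ δ ⬝ᵥ A *ᵥ δ := by
  have := hA.dotProduct_mulVec_nonneg δ
  simpa using this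

lemma part2 {m : ℕ} (hm : 1 ≤ m) (A B : Matrix (Fin n) (Fin n) ℝ)
    (hA : A.PosSemidef) (hr : A.rank = m) (hB : B.IsSymm)
    (hker : ∀ δ : Fin n → ℝ, A *ᵥ δ = 0 → B *ᵥ δ = 0)
    (δ : Fin n → ℝ) :
    |δ ⬝ᵥ B *ᵥ δ| ≤ (sigmaMax B / dmin A) * (δ ⬝ᵥ A *ᵥ δ) := by
  classical
  obtain ⟨hd, hdle⟩ := dmin_facts hm A hA hr
  set lam := hA.1.eigenvalues with hlam
  set U : Matrix (Fin n) (Fin n) ℝ := (hA.1.eigenvectorUnitary : Matrix (Fin n) (Fin n) ℝ)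
    with hU
  have hU1 : U * star U = 1 := Unitary.coe_mul_star_self hA.1.eigenvectorUnitary
  have hU2 : star U * U = 1 := Unitary.coe_star_mul_self hA.1.eigenvectorUnitary
  have hUT : Uᵀ = star U := by
    rw [star_eq_conjTranspose, conjTranspose_eq_transpose_of_trivial]
  have hspec : A = U * Matrix.diagonal lam * star U := by
    have := hA.1.spectral_theorem
    simpa only [RCLike.ofReal_real_eq_id, Function.comp_def, id_eq, Unitary.conjStarAlgAut_apply, Unitary.coe_star] using this
  -- the key isometry property
  have key : ∀ a b : Fin n → ℝ, (U *ᵥ a) ⬝ᵥ (U *ᵥ b) = a ⬝ᵥ b := by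
    intro a b
    rw [dotProduct_mulVec, vecMul_mulVec, hUT, hU2, vecMul_one]
  have keyA : ∀ a b : Fin n → ℝ, (U *ᵥ a) ⬝ᵥ (A *ᵥ (U *ᵥ b))
      = a ⬝ᵥ (Matrix.diagonal lam *ᵥ b) := by
    intro a b
    have : A *ᵥ (U *ᵥ b) = U *ᵥ (Matrix.diagonal lam *ᵥ b) := by
      rw [hspec, mulVec_mulVec, mulVec_mulVec,
        mul_assoc (U * Matrix.diagonal lam) (star U) U, hU2, mul_one]
    rw [this, key]
  set e : Fin n → ℝ := star U *ᵥ δ with he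
  have hδe : U *ᵥ e = δ := by rw [he, mulVec_mulVec, hU1, one_mulVec]
  set e₁ : Fin n → ℝ := fun i => if 0 < lam i then e i else 0 with he₁
  set e₀ : Fin n → ℝ := fun i => if 0 < lam i then 0 else e i with he₀
  have he01 : e₀ + e₁ = e := by
    funext i
    by_cases h : 0 < lam i <;> simp [he₀, he₁, h]
  set δ₀ : Fin n → ℝ := U *ᵥ e₀ with hδ₀
  set δ₁ : Fin n → ℝ := U *ᵥ e₁ with hδ₁
  have hδ01 : δ₀ + δ₁ = δ := by
    rw [hδ₀, hδ₁, ← mulVec_add, he01, hδe]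
  have hlam0 : ∀ i, ¬ 0 < lam i → lam i = 0 := fun i h =>
    le_antisymm (not_lt.mp h) (hA.eigenvalues_nonneg i)
  -- A *ᵥ δ₀ = 0
  have hAδ0 : A *ᵥ δ₀ = 0 := by
    rw [hδ₀, hspec, mulVec_mulVec,
      mul_assoc (U * Matrix.diagonal lam) (star U) U, hU2, mul_one, ← mulVec_mulVec]
    have : Matrix.diagonal lam *ᵥ e₀ = 0 := by
      funext i
      rw [mulVec_diagonal]
      by_cases h : 0 < lam i
      · simp [he₀, h]
      · simp [hlam0 i h]
    rw [this, mulVec_zero]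
  have hBδ0 : B *ᵥ δ₀ = 0 := hker _ hAδ0
  -- symmetry of B in the quadratic form
  have hsymmv : ∀ a b : Fin n → ℝ, a ⬝ᵥ B *ᵥ b = b ⬝ᵥ B *ᵥ a := by
    intro a b
    rw [dotProduct_mulVec]
    conv_lhs => rw [← hB.eq]
    rw [vecMul_transpose, dotProduct_comm]
  have hBsplit : δ ⬝ᵥ B *ᵥ δ = δ₁ ⬝ᵥ B *ᵥ δ₁ := by
    conv_lhs => rw [← hδ01]
    rw [mulVec_add, dotProduct_add, add_dotProduct, add_dotProduct, hBδ0,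
      dotProduct_zero, dotProduct_zero, zero_add, zero_add]
    rw [hsymmv δ₀ δ₁, hBδ0, dotProduct_zero, zero_add]
  -- quadratic form of A in coordinates
  have hQform : δ ⬝ᵥ A *ᵥ δ = ∑ i, lam i * (e i * e i) := by
    conv_lhs => rw [← hδe]
    rw [keyA]
    rw [dotProduct]
    apply Finset.sum_congr rfl
    intro i _
    rw [mulVec_diagonal]
    ring
  set s : ℝ := δ₁ ⬝ᵥ δ₁ with hs
  have hnorm1 : s = ∑ i, e₁ i * e₁ i := by rw [hs, hδ₁, key]; rfl
  have hs0 : 0 ≤ s := by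
    rw [hnorm1]
    exact Finset.sum_nonneg fun i _ => mul_self_nonneg _
  have hds : dmin A * s ≤ δ ⬝ᵥ A *ᵥ δ := by
    rw [hQform, hnorm1, Finset.mul_sum]
    apply Finset.sum_le_sum
    intro i _
    by_cases h : 0 < lam i
    · simp only [he₁, if_pos h]
      nlinarith [hdle i h, mul_self_nonneg (e i)]
    · simp only [he₁, if_neg h, hlam0 i h]
      simp
  have hQnn : 0 ≤ δ ⬝ᵥ A *ᵥ δ := psd_quad_nonneg A hA δ
  have hσ : |δ₁ ⬝ᵥ B *ᵥ δ₁| ≤ sigmaMax B * s := by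
    rcases eq_or_lt_of_le hs0 with hseq | hspos
    · have hδ₁0 : δ₁ = 0 := by
        rw [← dotProduct_self_eq_zero (v := δ₁)]
        exact hseq.symm
      rw [hδ₁0]
      simp only [zero_dotProduct, abs_zero]
      exact mul_nonneg (sigmaMax_nonneg B) hs0
    · set c : ℝ := Real.sqrt s with hc
      have hc0 : 0 < c := Real.sqrt_pos.mpr hspos
      have hc2 : c * c = s := Real.mul_self_sqrt hs0
      set u : Fin n → ℝ := c⁻¹ • δ₁ with hu
      have huu : u ⬝ᵥ u = 1 := by
        rw [hu, smul_dotProduct, dotProduct_smul, ← hs]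
        have := hc0.ne'
        simp only [smul_eq_mul]
        rw [← hc2]
        field_simp
      have h1 : |u ⬝ᵥ B *ᵥ u| ≤ sigmaMax B := le_sigmaMax B huu
      have h2 : u ⬝ᵥ B *ᵥ u = c⁻¹ * c⁻¹ * (δ₁ ⬝ᵥ B *ᵥ δ₁) := by
        rw [hu, smul_dotProduct, mulVec_smul, dotProduct_smul]
        simp [smul_eq_mul]
        ring
      rw [h2, abs_mul, abs_mul] at h1
      have hcinv : |c⁻¹| = c⁻¹ := abs_of_pos (inv_pos.mpr hc0)
      rw [hcinv] at h1
      have := mul_le_mul_of_nonneg_left h1 (le_of_lt (mul_pos hc0 hc0))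
      calc |δ₁ ⬝ᵥ B *ᵥ δ₁| = c * c * (c⁻¹ * (c⁻¹ * |δ₁ ⬝ᵥ B *ᵥ δ₁|)) := by
            field_simp
        _ ≤ c * c * sigmaMax B := by
            apply mul_le_mul_of_nonneg_left _ (le_of_lt (mul_pos hc0 hc0))
            calc c⁻¹ * (c⁻¹ * |δ₁ ⬝ᵥ B *ᵥ δ₁|) = c⁻¹ * c⁻¹ * |δ₁ ⬝ᵥ B *ᵥ δ₁| := by ring
              _ ≤ sigmaMax B := h1
        _ = sigmaMax B * s := by rw [hc2]; ring
  calc |δ ⬝ᵥ B *ᵥ δ| = |δ₁ ⬝ᵥ B *ᵥ δ₁| := by rw [hBsplit]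
    _ ≤ sigmaMax B * s := hσ
    _ = (sigmaMax B / dmin A) * (dmin A * s) := by field_simp
    _ ≤ (sigmaMax B / dmin A) * (δ ⬝ᵥ A *ᵥ δ) := by
        apply mul_le_mul_of_nonneg_left hds
        exact div_nonneg (sigmaMax_nonneg B) (le_of_lt hd)

end Aux

/-- If Q(x) is continuous, symmetric PSD of constant rank m ≥ 1 and H(x) is
continuous symmetric with ker Q(x) ⊆ ker H(x), then ψ(x) = σ_max(H(x))/d_min(x)
is well-defined (d_min > 0), satisfies |δ'H(x)δ| ≤ ψ(x)·δ'Q(x)δ, and is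
continuous whenever d_min is continuous (and strictly positive). -/
theorem stmt16 {n k m : ℕ} (hm : 1 ≤ m)
    (Q H : (Fin k → ℝ) → Matrix (Fin n) (Fin n) ℝ)
    (hQcont : Continuous Q) (hHcont : Continuous H)
    (hQ : ∀ x, (Q x).PosSemidef) (hH : ∀ x, (H x).IsSymm)
    (hrank : ∀ x, (Q x).rank = m)
    (hker : ∀ x (δ : Fin n → ℝ), Q x *ᵥ δ = 0 → H x *ᵥ δ = 0) :
    (∀ x, 0 < dmin (Q x)) ∧
    (∀ x (δ : Fin n → ℝ),
        |δ ⬝ᵥ H x *ᵥ δ| ≤ (sigmaMax (H x) / dmin (Q x)) * (δ ⬝ᵥ Q x *ᵥ δ)) ∧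
    ((Continuous fun x => dmin (Q x)) →
        Continuous fun x => sigmaMax (H x) / dmin (Q x)) := by
  have h1 : ∀ x, 0 < dmin (Q x) := fun x =>
    (dmin_facts hm (Q x) (hQ x) (hrank x)).1
  refine ⟨h1, fun x δ => part2 hm (Q x) (H x) (hQ x) (hrank x) (hH x) (hker x) δ, ?_⟩
  intro hdc
  exact (sigmaMax_continuous.comp hHcont).div hdc fun x => ne_of_gt (h1 x)
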